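/- Let q ∈ ℝ with q > 2, and for n ∈ ℤ set λ_n = (1/2)·ln((q+2)/(q−2)) + i n π. Let b : ℤ → ℂ satisfy Σ_{n∈ℤ} |b_n| < ∞ with b not identically zero, let y_e(t) = Σ_{n∈ℤ} b_n e^{λ_n t}, let d : ℝ → ℂ be measurable with |d(t)| ≤ M for all t and some M ≥ 0, and set y = y_e + d. Fix c > 2 and for T ∈ ℝ define q_T = 2·( ‖y‖_{L²(T,T+c)} + ‖y‖_{L²(T−2,T+c−2)} ) / ( ‖y‖_{L²(T,T+c)} − ‖y‖_{L²(T−2,T+c−2)} ). Then q_T → q as T → +∞. -/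

import Mathlib

open MeasureTheory

set_option maxHeartbeats 1000000

lemma my_sqrt_sub_le {x y : ℝ} (hy : 0 ≤ y) (h : y ≤ x) :
    Real.sqrt x - Real.sqrt y ≤ Real.sqrt (x - y) := by
  have hs : x ≤ (Real.sqrt y + Real.sqrt (x - y)) ^ 2 := by
    nlinarith [Real.sq_sqrt hy, Real.sq_sqrt (sub_nonneg.2 h), Real.sqrt_nonneg y,
      Real.sqrt_nonneg (x - y)]
  have h2 := (Real.sqrt_le_sqrt hs).trans_eq (Real.sqrt_sq (by positivity))
  linarith

lemma my_abs_sqrt_sub_sqrt_le {x y : ℝ} (hx : 0 ≤ x) (hy : 0 ≤ y) :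
    |Real.sqrt x - Real.sqrt y| ≤ Real.sqrt |x - y| := by
  rcases le_total y x with h | h
  · rw [abs_of_nonneg (sub_nonneg.2 h), abs_of_nonneg (sub_nonneg.2 (Real.sqrt_le_sqrt h))]
    exact my_sqrt_sub_le hy h
  · rw [abs_of_nonpos (sub_nonpos.2 h), abs_of_nonpos (sub_nonpos.2 (Real.sqrt_le_sqrt h)),
      neg_sub x y]
    have := my_sqrt_sub_le hx h
    linarith

lemma my_orth (k : ℤ) :
    (∫ t in (0:ℝ)..2, Complex.exp ((k : ℂ) * (Real.pi : ℂ) * Complex.I * (t : ℂ))) =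
      if k = 0 then 2 else 0 := by
  rcases eq_or_ne k 0 with hk | hk
  · subst hk
    simp
  · rw [if_neg hk]
    have hc : (k : ℂ) * (Real.pi : ℂ) * Complex.I ≠ 0 :=
      mul_ne_zero (mul_ne_zero (Int.cast_ne_zero.mpr hk)
        (Complex.ofReal_ne_zero.mpr Real.pi_ne_zero)) Complex.I_ne_zero
    rw [integral_exp_mul_complex hc]
    have e2 : Complex.exp ((k:ℂ) * (Real.pi:ℂ) * Complex.I * ((2:ℝ):ℂ)) = 1 := by
      have h9 : (k:ℂ) * (Real.pi:ℂ) * Complex.I * ((2:ℝ):ℂ)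
          = (k:ℂ) * (2 * (Real.pi:ℂ) * Complex.I) := by push_cast; ring
      rw [h9, Complex.exp_int_mul_two_pi_mul_I]
    have e0 : Complex.exp ((k:ℂ) * (Real.pi:ℂ) * Complex.I * ((0:ℝ):ℂ)) = 1 := by
      norm_num
    rw [e2, e0]
    simp

/-- Corollary 5.1 of the paper (coefficient part) for two connected strings with joint
anti-damping: the estimator computed from two shifted windows of the disturbed output
converges to the true anti-damping coefficient `q > 2` as `T → +∞`. -/
theorem strings_disturbed_identification (q : ℝ) (hq : 2 < q)
    (lam : ℤ → ℂ)
    (hlam : ∀ n : ℤ,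
      lam n = ((Real.log ((q + 2) / (q - 2)) : ℂ)) / 2 + (n : ℂ) * (Real.pi : ℂ) * Complex.I)
    (b : ℤ → ℂ) (hb : Summable fun n => ‖b n‖) (hb0 : b ≠ 0)
    (M : ℝ) (hM : 0 ≤ M)
    (d : ℝ → ℂ) (hdmeas : Measurable d) (hdM : ∀ t : ℝ, ‖d t‖ ≤ M)
    (y : ℝ → ℂ)
    (hy : ∀ t : ℝ, y t = (∑' n : ℤ, b n * Complex.exp (lam n * (t : ℂ))) + d t)
    (c : ℝ) (hc : 2 < c) :
    Filter.Tendsto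
      (fun T : ℝ =>
        2 * (Real.sqrt (∫ t in T..(T + c), ‖y t‖ ^ 2) +
              Real.sqrt (∫ t in (T - 2)..(T + c - 2), ‖y t‖ ^ 2)) /
          (Real.sqrt (∫ t in T..(T + c), ‖y t‖ ^ 2) -
              Real.sqrt (∫ t in (T - 2)..(T + c - 2), ‖y t‖ ^ 2)))
      Filter.atTop (nhds q) := by
  -- basic constants
  set f : ℝ := Real.log ((q + 2) / (q - 2)) / 2 with hf_def
  have hq2 : (0:ℝ) < q - 2 := by linarith
  have hq2' : (0:ℝ) < q + 2 := by linarith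
  have hr1 : 1 < (q + 2) / (q - 2) := (one_lt_div hq2).2 (by linarith)
  have hf : 0 < f := by
    have := Real.log_pos hr1
    rw [hf_def]; linarith
  have hef : Real.exp (2 * f) = (q + 2) / (q - 2) := by
    rw [hf_def]
    rw [show 2 * (Real.log ((q + 2) / (q - 2)) / 2) = Real.log ((q + 2) / (q - 2)) by ring]
    exact Real.exp_log (by positivity)
  set ρ : ℝ := (q - 2) / (q + 2) with hρ_def
  have hρpos : 0 < ρ := by positivity
  have hρlt : ρ < 1 := (div_lt_one hq2').2 (by linarith)
  have heρ : Real.exp (-(2 * f)) = ρ := by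
    rw [Real.exp_neg, hef, hρ_def, inv_div]
  have hqρ : (q + 2) * ρ = q - 2 := by
    rw [hρ_def]; field_simp
  -- the periodic part g
  set g : ℝ → ℂ := fun t => ∑' n : ℤ, b n * Complex.exp ((n:ℂ) * (Real.pi:ℂ) * Complex.I * (t:ℂ))
    with hg_def
  have hterm_norm : ∀ (n k : ℤ) (t : ℝ),
      ‖b n * Complex.exp ((k:ℂ) * (Real.pi:ℂ) * Complex.I * (t:ℂ))‖ = ‖b n‖ := by
    intro n k t
    rw [norm_mul]
    have h1 : (k:ℂ) * (Real.pi:ℂ) * Complex.I * (t:ℂ)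
        = ((k * Real.pi * t : ℝ) : ℂ) * Complex.I := by push_cast; ring
    rw [h1]
    rw [Complex.norm_exp_ofReal_mul_I, mul_one]
  have hg_cont : Continuous g := by
    rw [hg_def]
    exact continuous_tsum
      (fun n => by fun_prop)
      hb (fun n t => le_of_eq (hterm_norm n n t))
  set C : ℝ := ∑' n : ℤ, ‖b n‖ with hC_def
  have hC0 : 0 ≤ C := tsum_nonneg (fun _ => norm_nonneg _)
  have hgC : ∀ t, ‖g t‖ ≤ C := by
    intro t
    rw [hg_def]
    calc ‖∑' n : ℤ, b n * Complex.exp ((n:ℂ) * (Real.pi:ℂ) * Complex.I * (t:ℂ))‖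
        ≤ ∑' n : ℤ, ‖b n * Complex.exp ((n:ℂ) * (Real.pi:ℂ) * Complex.I * (t:ℂ))‖ :=
          norm_tsum_le_tsum_norm (by
            refine hb.congr fun n => ?_
            exact (hterm_norm n n t).symm)
      _ = C := by rw [hC_def]; exact tsum_congr fun n => hterm_norm n n t
  have hg_per : ∀ t, g (t + 2) = g t := by
    intro t
    rw [hg_def]
    refine tsum_congr fun n => ?_
    congr 1
    have h1 : (n:ℂ) * (Real.pi:ℂ) * Complex.I * ((t + 2 : ℝ):ℂ)
        = (n:ℂ) * (Real.pi:ℂ) * Complex.I * (t:ℂ) + (n:ℂ) * (2 * (Real.pi:ℂ) * Complex.I) := by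
      push_cast; ring
    rw [h1, Complex.exp_add, Complex.exp_int_mul_two_pi_mul_I, mul_one]
  -- Fourier coefficients
  have hFourier : ∀ m : ℤ,
      (∫ t in Set.Ioc (0:ℝ) 2, g t * Complex.exp (-((m:ℂ) * (Real.pi:ℂ) * Complex.I * (t:ℂ))))
        = 2 * b m := by
    intro m
    have hrw : ∀ t : ℝ, g t * Complex.exp (-((m:ℂ) * (Real.pi:ℂ) * Complex.I * (t:ℂ)))
        = ∑' n : ℤ, b n * Complex.exp (((n - m : ℤ):ℂ) * (Real.pi:ℂ) * Complex.I * (t:ℂ)) := by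
      intro t
      rw [hg_def]
      rw [← tsum_mul_right]
      refine tsum_congr fun n => ?_
      rw [mul_assoc, ← Complex.exp_add]
      congr 1
      push_cast; ring
    simp only [hrw]
    rw [MeasureTheory.integral_tsum]
    · rw [tsum_eq_single m]
      · have h0 : ((m - m : ℤ):ℂ) = 0 := by push_cast; ring
        simp only [h0, zero_mul, Complex.exp_zero, mul_one]
        rw [MeasureTheory.setIntegral_const, Real.volume_real_Ioc]
        norm_num
      · intro n hn
        rw [MeasureTheory.integral_const_mul]
        have : (∫ t in Set.Ioc (0:ℝ) 2,
            Complex.exp (((n - m : ℤ):ℂ) * (Real.pi:ℂ) * Complex.I * (t:ℂ))) = 0 := by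
          rw [← intervalIntegral.integral_of_le (by norm_num : (0:ℝ) ≤ 2)]
          rw [my_orth (n - m), if_neg (sub_ne_zero.2 hn)]
        rw [this, mul_zero]
    · exact fun n => Continuous.aestronglyMeasurable (by fun_prop)
    · have hpt : ∀ (n : ℤ) (t : ℝ),
          (‖b n * Complex.exp (((n - m : ℤ):ℂ) * (Real.pi:ℂ) * Complex.I * (t:ℂ))‖₊ : ENNReal)
            = (‖b n‖₊ : ENNReal) := by
        intro n t
        exact congrArg _ (NNReal.eq (hterm_norm n (n - m) t))
      calc (∑' n : ℤ, ∫⁻ t in Set.Ioc (0:ℝ) 2,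
              (‖b n * Complex.exp (((n - m : ℤ):ℂ) * (Real.pi:ℂ) * Complex.I * (t:ℂ))‖₊ : ENNReal))
          = ∑' n : ℤ, (‖b n‖₊ : ENNReal) * 2 := by
            refine tsum_congr fun n => ?_
            rw [MeasureTheory.setLIntegral_congr_fun measurableSet_Ioc
              (fun t _ => hpt n t)]
            rw [MeasureTheory.setLIntegral_const]
            rw [Real.volume_Ioc]
            norm_num
        _ ≠ ⊤ := by
            rw [ENNReal.tsum_mul_right]
            exact ENNReal.mul_ne_top
              (ENNReal.tsum_coe_ne_top_iff_summable.2 (by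
                simpa only [← NNReal.summable_coe, coe_nnnorm] using hb))
              (by norm_num)
  -- positivity of the period energy P
  set P : ℝ := ∫ t in (0:ℝ)..2, ‖g t‖ ^ 2 with hP_def
  have hPnonneg : 0 ≤ P :=
    intervalIntegral.integral_nonneg (by norm_num) (fun t _ => sq_nonneg _)
  have hP : 0 < P := by
    rcases hPnonneg.lt_or_eq with h | h
    · exact h
    exfalso
    have hgint : IntegrableOn (fun t => ‖g t‖ ^ 2) (Set.Ioc (0:ℝ) 2) :=
      (hg_cont.norm.pow 2).integrableOn_Ioc
    have h0 : ∫ t in Set.Ioc (0:ℝ) 2, ‖g t‖ ^ 2 = 0 := by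
      rw [← intervalIntegral.integral_of_le (by norm_num : (0:ℝ) ≤ 2)]
      exact h.symm
    have hg0 : ∀ᵐ t ∂(volume.restrict (Set.Ioc (0:ℝ) 2)), g t = 0 := by
      have hae := (MeasureTheory.integral_eq_zero_iff_of_nonneg
        (fun t => sq_nonneg ‖g t‖) hgint).mp h0
      filter_upwards [hae] with t ht
      have ht' : ‖g t‖ ^ 2 = 0 := ht
      have : ‖g t‖ = 0 := by nlinarith [norm_nonneg (g t)]
      exact norm_eq_zero.mp this
    obtain ⟨m, hm⟩ := Function.ne_iff.mp hb0
    have hFm := hFourier m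
    rw [MeasureTheory.integral_congr_ae (g := fun _ => (0:ℂ))
      (by filter_upwards [hg0] with t ht; rw [ht, zero_mul])] at hFm
    rw [MeasureTheory.integral_zero] at hFm
    refine hm ?_
    have h2 : (2:ℂ) * b m = 0 := hFm.symm
    have h3 : b m = 0 := by
      rcases mul_eq_zero.mp h2 with h' | h'
      · norm_num at h'
      · exact h'
    simpa using h3
  -- the exact solution ye
  set ye : ℝ → ℂ := fun t => (Real.exp (f * t) : ℂ) * g t with hye_def
  have hye : ∀ t : ℝ, (∑' n : ℤ, b n * Complex.exp (lam n * (t:ℂ))) = ye t := by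
    intro t
    rw [hye_def]
    simp only [hg_def]
    rw [← tsum_mul_left]
    refine tsum_congr fun n => ?_
    rw [hlam n]
    have h1 : (((Real.log ((q + 2) / (q - 2)) : ℂ)) / 2 + (n:ℂ) * (Real.pi:ℂ) * Complex.I)
        * (t:ℂ) = ((f * t : ℝ):ℂ) + (n:ℂ) * (Real.pi:ℂ) * Complex.I * (t:ℂ) := by
      rw [hf_def]; push_cast; ring
    rw [h1, Complex.exp_add, Complex.ofReal_exp]
    ring
  have hyfun : ∀ t, y t = ye t + d t := fun t => by rw [hy t, hye t]
  have hye_cont : Continuous ye := by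
    rw [hye_def]
    fun_prop
  have hyeC : ∀ t, ‖ye t‖ ≤ C * Real.exp (f * t) := by
    intro t
    rw [hye_def]
    simp only [norm_mul, Complex.norm_real, Real.norm_eq_abs,
      abs_of_pos (Real.exp_pos _)]
    rw [mul_comm]
    exact mul_le_mul_of_nonneg_right (hgC t) (Real.exp_pos _).le
  have hyen : ∀ s : ℝ, ‖ye s‖ ^ 2 = Real.exp (2 * (f * s)) * ‖g s‖ ^ 2 := by
    intro s
    rw [hye_def]
    simp only [norm_mul, Complex.norm_real, Real.norm_eq_abs,
      abs_of_pos (Real.exp_pos _)]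
    rw [mul_pow, ← Real.exp_nat_mul]
    norm_num
  have hymeas : Measurable y := by
    have hyy : y = fun t => ye t + d t := funext hyfun
    rw [hyy]
    exact hye_cont.measurable.add hdmeas
  have hynorm : ∀ t, ‖y t‖ ≤ C * Real.exp (f * t) + M := by
    intro t
    rw [hyfun t]
    calc ‖ye t + d t‖ ≤ ‖ye t‖ + ‖d t‖ := norm_add_le _ _
      _ ≤ C * Real.exp (f * t) + M := add_le_add (hyeC t) (hdM t)
  -- integrability
  have hyeInt : ∀ a b' : ℝ, IntervalIntegrable (fun t => ‖ye t‖ ^ 2) volume a b' :=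
    fun a b' => (hye_cont.norm.pow 2).intervalIntegrable a b'
  have hyInt : ∀ a b' : ℝ, IntervalIntegrable (fun t => ‖y t‖ ^ 2) volume a b' := by
    intro a b'
    have hbnd : IntervalIntegrable (fun t => (C * Real.exp (f * t) + M) ^ 2) volume a b' :=
      (((continuous_const.mul (Real.continuous_exp.comp (continuous_const.mul continuous_id))).add
        continuous_const).pow 2).intervalIntegrable a b'
    refine hbnd.mono_fun (hymeas.norm.pow_const 2).aestronglyMeasurable ?_
    refine Filter.Eventually.of_forall fun t => ?_
    simp only [Real.norm_eq_abs]
    rw [abs_of_nonneg (by positivity : (0:ℝ) ≤ (C * Real.exp (f * t) + M) ^ 2),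
      abs_of_nonneg (sq_nonneg ‖y t‖)]
    exact pow_le_pow_left₀ (norm_nonneg _) (hynorm t) 2
  -- pointwise difference bound
  have hpt : ∀ t : ℝ, |‖y t‖ ^ 2 - ‖ye t‖ ^ 2| ≤ 2 * M * (C * Real.exp (f * t)) + M ^ 2 := by
    intro t
    have h1 : ‖y t‖ ≤ ‖ye t‖ + M := by
      rw [hyfun t]
      exact (norm_add_le _ _).trans (by linarith [hdM t])
    have h2 : ‖ye t‖ ≤ ‖y t‖ + M := by
      have hrw : ye t = y t - d t := by rw [hyfun t]; ring
      rw [hrw]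
      exact (norm_sub_le _ _).trans (by linarith [hdM t])
    have h3 := hyeC t
    have h4 := norm_nonneg (y t)
    have h5 := norm_nonneg (ye t)
    have h6 : (0:ℝ) ≤ ‖ye t‖ + ‖y t‖ := by linarith
    have h7 : M * ‖ye t‖ ≤ M * (C * Real.exp (f * t)) := mul_le_mul_of_nonneg_left h3 hM
    rw [abs_le]
    constructor
    · nlinarith [mul_le_mul_of_nonneg_right (show ‖ye t‖ - ‖y t‖ ≤ M by linarith) h6]
    · nlinarith [mul_le_mul_of_nonneg_right (show ‖y t‖ - ‖ye t‖ ≤ M by linarith) h6]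
  -- the main exact energy A
  set A : ℝ → ℝ := fun T => ∫ t in T..(T + c), ‖ye t‖ ^ 2 with hA_def
  have hA0 : ∀ T, 0 ≤ A T := fun T =>
    intervalIntegral.integral_nonneg (by linarith) (fun t _ => sq_nonneg _)
  -- window error bound
  have hwin : ∀ a : ℝ,
      |(∫ t in a..(a + c), ‖y t‖ ^ 2) - ∫ t in a..(a + c), ‖ye t‖ ^ 2|
        ≤ 2 * M * C * c * Real.exp (f * (a + c)) + M ^ 2 * c := by
    intro a
    have hac : a ≤ a + c := by linarith
    rw [← intervalIntegral.integral_sub (hyInt a (a + c)) (hyeInt a (a + c))]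
    calc |∫ t in a..(a + c), (‖y t‖ ^ 2 - ‖ye t‖ ^ 2)|
        ≤ ∫ t in a..(a + c), |‖y t‖ ^ 2 - ‖ye t‖ ^ 2| :=
          intervalIntegral.abs_integral_le_integral_abs hac
      _ ≤ ∫ t in a..(a + c), (2 * M * (C * Real.exp (f * (a + c))) + M ^ 2) := by
          apply intervalIntegral.integral_mono_on hac
            ((hyInt a (a + c)).sub (hyeInt a (a + c))).abs intervalIntegrable_const
          intro t ht
          refine (hpt t).trans ?_
          have hee : Real.exp (f * t) ≤ Real.exp (f * (a + c)) :=
            Real.exp_le_exp.2 (mul_le_mul_of_nonneg_left ht.2 hf.le)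
          nlinarith [mul_le_mul_of_nonneg_left hee (by positivity : (0:ℝ) ≤ 2 * M * C)]
      _ = (2 * M * (C * Real.exp (f * (a + c))) + M ^ 2) * c := by
          rw [intervalIntegral.integral_const, smul_eq_mul]; ring
      _ = 2 * M * C * c * Real.exp (f * (a + c)) + M ^ 2 * c := by ring
  set C1 : ℝ := 2 * M * C * c * Real.exp (f * c) with hC1_def
  have hC1 : 0 ≤ C1 := by positivity
  -- shift identity
  have hAshift : ∀ T : ℝ,
      (∫ t in (T - 2)..(T + c - 2), ‖ye t‖ ^ 2) = Real.exp (-(4 * f)) * A T := by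
    intro T
    have h1 : ∀ t : ℝ, ‖ye (t - 2)‖ ^ 2 = Real.exp (-(4 * f)) * ‖ye t‖ ^ 2 := by
      intro t
      have hg2 : g (t - 2) = g t := by
        have hgp := hg_per (t - 2)
        rw [show t - 2 + 2 = t by ring] at hgp
        exact hgp.symm
      rw [hyen, hyen, hg2, show Real.exp (2 * (f * (t - 2)))
        = Real.exp (-(4 * f)) * Real.exp (2 * (f * t)) by rw [← Real.exp_add]; congr 1; ring]
      ring
    calc (∫ t in (T - 2)..(T + c - 2), ‖ye t‖ ^ 2)
        = ∫ t in T..(T + c), ‖ye (t - 2)‖ ^ 2 :=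
          (intervalIntegral.integral_comp_sub_right (fun s => ‖ye s‖ ^ 2) 2).symm
      _ = ∫ t in T..(T + c), Real.exp (-(4 * f)) * ‖ye t‖ ^ 2 :=
          intervalIntegral.integral_congr fun t _ => h1 t
      _ = Real.exp (-(4 * f)) * A T := by
          rw [intervalIntegral.integral_const_mul, hA_def]
  -- lower bound for A
  have hAlow : ∀ T : ℝ, Real.exp (2 * (f * T)) * P ≤ A T := by
    intro T
    have hT2 : T ≤ T + 2 := by linarith
    have step1 : (∫ t in T..(T + 2), Real.exp (2 * (f * T)) * ‖g t‖ ^ 2)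
        ≤ ∫ t in T..(T + 2), ‖ye t‖ ^ 2 := by
      apply intervalIntegral.integral_mono_on hT2
        ((continuous_const.mul (hg_cont.norm.pow 2)).intervalIntegrable T (T + 2))
        (hyeInt T (T + 2))
      intro t ht
      rw [hyen t]
      have hle : Real.exp (2 * (f * T)) ≤ Real.exp (2 * (f * t)) :=
        Real.exp_le_exp.2 (by nlinarith [ht.1, hf.le])
      exact mul_le_mul_of_nonneg_right hle (sq_nonneg _)
    have step2 : (∫ t in T..(T + 2), Real.exp (2 * (f * T)) * ‖g t‖ ^ 2)
        = Real.exp (2 * (f * T)) * P := by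
      rw [intervalIntegral.integral_const_mul]
      congr 1
      have hper2 : Function.Periodic (fun t => ‖g t‖ ^ 2) 2 := by
        intro t
        show ‖g (t + 2)‖ ^ 2 = ‖g t‖ ^ 2
        rw [hg_per t]
      rw [hper2.intervalIntegral_add_eq T 0, hP_def]
      norm_num
    have step3 : (∫ t in T..(T + 2), ‖ye t‖ ^ 2) ≤ A T := by
      rw [hA_def]
      exact intervalIntegral.integral_mono_interval (le_refl T) hT2 (by linarith)
        (Filter.Eventually.of_forall fun t => sq_nonneg _) (hyeInt T (T + c))
    linarith [step1, step2.symm.le, step3]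
  -- normalized quantities and error bounds
  set S1 : ℝ → ℝ := fun T => Real.sqrt (∫ t in T..(T + c), ‖y t‖ ^ 2) with hS1_def
  set S2 : ℝ → ℝ := fun T => Real.sqrt (∫ t in (T - 2)..(T + c - 2), ‖y t‖ ^ 2) with hS2_def
  have hX0 : ∀ T : ℝ, 0 ≤ ∫ t in T..(T + c), ‖y t‖ ^ 2 := fun T =>
    intervalIntegral.integral_nonneg (by linarith) (fun t _ => sq_nonneg _)
  have hX20 : ∀ T : ℝ, 0 ≤ ∫ t in (T - 2)..(T + c - 2), ‖y t‖ ^ 2 := fun T =>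
    intervalIntegral.integral_nonneg (by linarith) (fun t _ => sq_nonneg _)
  set eps : ℝ → ℝ := fun T => S1 T / Real.exp (f * T) - Real.sqrt (A T) / Real.exp (f * T)
    with heps_def
  set del : ℝ → ℝ := fun T => S2 T / Real.exp (f * T)
    - ρ * (Real.sqrt (A T) / Real.exp (f * T)) with hdel_def
  set W : ℝ := Real.sqrt (C1 + M ^ 2 * c) with hW_def
  have hquot : ∀ u : ℝ, Real.sqrt (Real.exp u) / Real.exp u = Real.exp (-u / 2) := by
    intro u
    have h1 : Real.sqrt (Real.exp u) = Real.exp (u / 2) := by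
      rw [show Real.exp u = Real.exp (u / 2) ^ 2 by
        rw [← Real.exp_nat_mul]; congr 1; push_cast; ring]
      exact Real.sqrt_sq (Real.exp_pos _).le
    rw [h1, ← Real.exp_sub]
    congr 1; ring
  have hXA : ∀ T : ℝ, 0 ≤ T →
      |(∫ t in T..(T + c), ‖y t‖ ^ 2) - A T| ≤ (C1 + M ^ 2 * c) * Real.exp (f * T) := by
    intro T hT
    have hAT : A T = ∫ t in T..(T + c), ‖ye t‖ ^ 2 := rfl
    rw [hAT]
    refine (hwin T).trans ?_
    have h1 : Real.exp (f * (T + c)) = Real.exp (f * c) * Real.exp (f * T) := by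
      rw [← Real.exp_add]; congr 1; ring
    have h2 : (1:ℝ) ≤ Real.exp (f * T) := Real.one_le_exp (mul_nonneg hf.le hT)
    rw [h1, hC1_def]
    nlinarith [sq_nonneg M, hc, mul_nonneg (mul_nonneg (sq_nonneg M) (by linarith : (0:ℝ) ≤ c))
      (by linarith : (0:ℝ) ≤ Real.exp (f * T) - 1)]
  have hX2A : ∀ T : ℝ, 0 ≤ T →
      |(∫ t in (T - 2)..(T + c - 2), ‖y t‖ ^ 2) - Real.exp (-(4 * f)) * A T|
        ≤ (C1 + M ^ 2 * c) * Real.exp (f * T) := by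
    intro T hT
    rw [← hAshift T]
    have h := hwin (T - 2)
    rw [show T - 2 + c = T + c - 2 by ring] at h
    refine h.trans ?_
    have h1 : Real.exp (f * (T + c - 2)) ≤ Real.exp (f * c) * Real.exp (f * T) := by
      rw [← Real.exp_add]
      exact Real.exp_le_exp.2 (by nlinarith [hf.le])
    have h2 : (1:ℝ) ≤ Real.exp (f * T) := Real.one_le_exp (mul_nonneg hf.le hT)
    rw [hC1_def]
    nlinarith [mul_le_mul_of_nonneg_left h1 (by positivity : (0:ℝ) ≤ 2 * M * C * c),
      mul_nonneg (mul_nonneg (sq_nonneg M) (by linarith : (0:ℝ) ≤ c))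
        (by linarith : (0:ℝ) ≤ Real.exp (f * T) - 1)]
  -- bound on eps
  have hεb : ∀ T : ℝ, 0 ≤ T → |eps T| ≤ W * Real.exp (-(f * T) / 2) := by
    intro T hT
    have hE : (0:ℝ) < Real.exp (f * T) := Real.exp_pos _
    have e1 : eps T = (Real.sqrt (∫ t in T..(T + c), ‖y t‖ ^ 2) - Real.sqrt (A T))
        / Real.exp (f * T) := by
      simp only [heps_def, hS1_def]
      rw [div_sub_div_same]
    rw [e1, abs_div, abs_of_pos hE]
    calc |Real.sqrt (∫ t in T..(T + c), ‖y t‖ ^ 2) - Real.sqrt (A T)| / Real.exp (f * T)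
        ≤ Real.sqrt ((C1 + M ^ 2 * c) * Real.exp (f * T)) / Real.exp (f * T) := by
          gcongr
          exact (my_abs_sqrt_sub_sqrt_le (hX0 T) (hA0 T)).trans
            (Real.sqrt_le_sqrt (hXA T hT))
      _ = W * Real.exp (-(f * T) / 2) := by
          rw [Real.sqrt_mul (by positivity), hW_def, mul_div_assoc, hquot (f * T)]
  -- bound on del
  have hδb : ∀ T : ℝ, 0 ≤ T → |del T| ≤ W * Real.exp (-(f * T) / 2) := by
    intro T hT
    have hE : (0:ℝ) < Real.exp (f * T) := Real.exp_pos _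
    have hρA : ρ * Real.sqrt (A T) = Real.sqrt (Real.exp (-(4 * f)) * A T) := by
      rw [show Real.exp (-(4 * f)) = ρ ^ 2 by
        rw [← heρ, ← Real.exp_nat_mul]; congr 1; push_cast; ring]
      rw [Real.sqrt_mul (sq_nonneg ρ), Real.sqrt_sq hρpos.le]
    have e1 : del T = (Real.sqrt (∫ t in (T - 2)..(T + c - 2), ‖y t‖ ^ 2)
        - Real.sqrt (Real.exp (-(4 * f)) * A T)) / Real.exp (f * T) := by
      simp only [hdel_def, hS2_def]
      rw [← hρA, ← mul_div_assoc, div_sub_div_same]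
    rw [e1, abs_div, abs_of_pos hE]
    calc |Real.sqrt (∫ t in (T - 2)..(T + c - 2), ‖y t‖ ^ 2)
          - Real.sqrt (Real.exp (-(4 * f)) * A T)| / Real.exp (f * T)
        ≤ Real.sqrt ((C1 + M ^ 2 * c) * Real.exp (f * T)) / Real.exp (f * T) := by
          gcongr
          exact (my_abs_sqrt_sub_sqrt_le (hX20 T)
            (mul_nonneg (Real.exp_pos _).le (hA0 T))).trans
            (Real.sqrt_le_sqrt (hX2A T hT))
      _ = W * Real.exp (-(f * T) / 2) := by
          rw [Real.sqrt_mul (by positivity), hW_def, mul_div_assoc, hquot (f * T)]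
  -- the bound tends to zero
  have hWlim : Filter.Tendsto (fun T : ℝ => W * Real.exp (-(f * T) / 2))
      Filter.atTop (nhds 0) := by
    have h1 : Filter.Tendsto (fun T : ℝ => -(f * T) / 2) Filter.atTop Filter.atBot := by
      have heq : (fun T : ℝ => -(f * T) / 2) = fun T : ℝ => (-(f / 2)) * T := by
        funext T; ring
      rw [heq]
      exact (Filter.tendsto_const_mul_atBot_of_neg (by linarith)).2 Filter.tendsto_id
    have h2 := (Real.tendsto_exp_atBot.comp h1).const_mul W
    simpa using h2
  have hεlim : Filter.Tendsto eps Filter.atTop (nhds 0) := by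
    rw [tendsto_zero_iff_abs_tendsto_zero]
    refine squeeze_zero' (Filter.Eventually.of_forall fun T => abs_nonneg _) ?_ hWlim
    exact Filter.eventually_atTop.2 ⟨0, fun T hT => hεb T hT⟩
  have hδlim : Filter.Tendsto del Filter.atTop (nhds 0) := by
    rw [tendsto_zero_iff_abs_tendsto_zero]
    refine squeeze_zero' (Filter.Eventually.of_forall fun T => abs_nonneg _) ?_ hWlim
    exact Filter.eventually_atTop.2 ⟨0, fun T hT => hδb T hT⟩
  -- lower bound for the normalized amplitude
  set κ : ℝ := Real.sqrt P with hκ_def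
  have hκpos : 0 < κ := Real.sqrt_pos.2 hP
  have hαlow : ∀ T : ℝ, κ ≤ Real.sqrt (A T) / Real.exp (f * T) := by
    intro T
    have hE : (0:ℝ) < Real.exp (f * T) := Real.exp_pos _
    rw [le_div_iff₀ hE]
    have h1 : Real.sqrt (Real.exp (2 * (f * T)) * P) = Real.exp (f * T) * κ := by
      rw [Real.sqrt_mul (Real.exp_pos _).le, hκ_def]
      congr 1
      rw [show Real.exp (2 * (f * T)) = Real.exp (f * T) ^ 2 by
        rw [show 2 * (f * T) = f * T + f * T by ring, Real.exp_add]; ring]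
      exact Real.sqrt_sq (Real.exp_pos _).le
    calc κ * Real.exp (f * T) = Real.sqrt (Real.exp (2 * (f * T)) * P) :=
          (mul_comm κ _).trans h1.symm
      _ ≤ Real.sqrt (A T) := Real.sqrt_le_sqrt (hAlow T)
  -- final assembly
  show Filter.Tendsto (fun T : ℝ => 2 * (S1 T + S2 T) / (S1 T - S2 T))
    Filter.atTop (nhds q)
  rw [← tendsto_sub_nhds_zero_iff]
  rw [tendsto_zero_iff_abs_tendsto_zero]
  set Kc : ℝ := 2 * (q + 2) / ((1 - ρ) * κ) with hKc_def
  have hboundlim : Filter.Tendsto (fun T => Kc * (|eps T| + |del T|))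
      Filter.atTop (nhds 0) := by
    have h1 : Filter.Tendsto (fun T => |eps T| + |del T|) Filter.atTop (nhds (|0| + |0|)) :=
      hεlim.abs.add hδlim.abs
    have h2 := h1.const_mul Kc
    simpa using h2
  refine squeeze_zero' (Filter.Eventually.of_forall fun T => abs_nonneg _) ?_ hboundlim
  have h1ρpos : (0:ℝ) < 1 - ρ := by linarith
  have hη : (0:ℝ) < (1 - ρ) * κ / 4 := by positivity
  have h1 : ∀ᶠ T in Filter.atTop, |eps T| < (1 - ρ) * κ / 4 := by
    have h := hεlim.abs
    rw [abs_zero] at h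
    exact h.eventually_lt_const hη
  have h2 : ∀ᶠ T in Filter.atTop, |del T| < (1 - ρ) * κ / 4 := by
    have h := hδlim.abs
    rw [abs_zero] at h
    exact h.eventually_lt_const hη
  filter_upwards [h1, h2] with T hT1 hT2
  have hE : (0:ℝ) < Real.exp (f * T) := Real.exp_pos _
  set α : ℝ := Real.sqrt (A T) / Real.exp (f * T) with hα_def
  have hκα : κ ≤ α := hαlow T
  clear_value α ρ κ eps del S1 S2
  have hαE : α * Real.exp (f * T) = Real.sqrt (A T) := by
    rw [hα_def]
    field_simp
  have ha : S1 T = (α + eps T) * Real.exp (f * T) := by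
    rw [heps_def]
    field_simp
    linarith [hαE]
  have hbb : S2 T = (ρ * α + del T) * Real.exp (f * T) := by
    have hαE2 : ρ * α * Real.exp (f * T) = ρ * Real.sqrt (A T) := by
      rw [mul_assoc, hαE]
    rw [hdel_def]
    field_simp
    linarith [hαE2]
  have k2 := neg_abs_le (eps T)
  have k3 := le_abs_self (del T)
  have k1 : (1 - ρ) * κ ≤ (1 - ρ) * α := mul_le_mul_of_nonneg_left hκα (by linarith)
  have k4 : (1 - ρ) * κ / 2 ≤ (1 - ρ) * α + eps T - del T := by linarith
  have hdlow : (1 - ρ) * κ / 2 * Real.exp (f * T) ≤ S1 T - S2 T := by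
    calc (1 - ρ) * κ / 2 * Real.exp (f * T)
        ≤ ((1 - ρ) * α + eps T - del T) * Real.exp (f * T) :=
          mul_le_mul_of_nonneg_right k4 hE.le
      _ = S1 T - S2 T := by rw [ha, hbb]; ring
  have hD : 0 < S1 T - S2 T := lt_of_lt_of_le (by positivity) hdlow
  have hkey : 2 * (S1 T + S2 T) - q * (S1 T - S2 T)
      = (q + 2) * (del T - ρ * eps T) * Real.exp (f * T) := by
    rw [ha, hbb]
    linear_combination (Real.exp (f * T) * (α + eps T)) * hqρ
  have hQ : 2 * (S1 T + S2 T) / (S1 T - S2 T) - q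
      = (q + 2) * (del T - ρ * eps T) * Real.exp (f * T) / (S1 T - S2 T) := by
    rw [← hkey]
    field_simp
  simp only [Function.comp_apply]
  rw [hQ, abs_div, abs_of_pos hD]
  have hnum : |(q + 2) * (del T - ρ * eps T) * Real.exp (f * T)|
      ≤ (q + 2) * (|del T| + |eps T|) * Real.exp (f * T) := by
    rw [abs_mul, abs_mul, abs_of_pos (by linarith : (0:ℝ) < q + 2), abs_of_pos hE]
    have hsub : |del T - ρ * eps T| ≤ |del T| + |eps T| := by
      rw [sub_eq_add_neg]
      refine (abs_add_le _ _).trans ?_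
      rw [abs_neg, abs_mul, abs_of_pos hρpos]
      nlinarith [abs_nonneg (eps T), hρlt.le]
    exact mul_le_mul_of_nonneg_right
      (mul_le_mul_of_nonneg_left hsub (by linarith)) hE.le
  calc |(q + 2) * (del T - ρ * eps T) * Real.exp (f * T)| / (S1 T - S2 T)
      ≤ ((q + 2) * (|del T| + |eps T|) * Real.exp (f * T))
        / ((1 - ρ) * κ / 2 * Real.exp (f * T)) := by
        apply div_le_div₀ (by positivity) hnum (by positivity) hdlow
    _ = Kc * (|eps T| + |del T|) := by
        rw [hKc_def]
        have hne : Real.exp (f * T) ≠ 0 := hE.ne'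
        have h1ρ : (1 - ρ) ≠ 0 := h1ρpos.ne'
        field_simp
        ring
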